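/- Let μ ∈ ℝ be a constant and let β(y,t) be a C² everywhere-positive function on an open set of ℝ² satisfying β_t + μ·β_{yy} = 0. Define, for p > 0, G(p,y,t) = μ(p·ln p − p) − μ·p·ln β(y,t). Then G satisfies the G-equation G_{yp}² − G_{yy} G_{pp} − G_{pt} = 0 at every point with p > 0. -/

import Mathlib

/-- Partial derivative of `f : ℝ³ → ℝ` in direction `v`, as a function. -/
noncomputable def pd (v : ℝ × ℝ × ℝ) (f : ℝ × ℝ × ℝ → ℝ) : ℝ × ℝ × ℝ → ℝ :=
  fun q => fderiv ℝ f q v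

/-- ∂/∂p for functions `G(p,y,t)`. -/
noncomputable def px : (ℝ × ℝ × ℝ → ℝ) → ℝ × ℝ × ℝ → ℝ := pd (1, 0, 0)
/-- ∂/∂y. -/
noncomputable def py : (ℝ × ℝ × ℝ → ℝ) → ℝ × ℝ × ℝ → ℝ := pd (0, 1, 0)
/-- ∂/∂t. -/
noncomputable def pt : (ℝ × ℝ × ℝ → ℝ) → ℝ × ℝ × ℝ → ℝ := pd (0, 0, 1)

/-- Partial derivative of `f : ℝ² → ℝ` in direction `v`, as a function. -/
noncomputable def pd2 (v : ℝ × ℝ) (f : ℝ × ℝ → ℝ) : ℝ × ℝ → ℝ :=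
  fun z => fderiv ℝ f z v

/-- Derivative in the first coordinate (i.e. `y` for `β(y,t)`). -/
noncomputable def p1 : (ℝ × ℝ → ℝ) → ℝ × ℝ → ℝ := pd2 (1, 0)
/-- Derivative in the second coordinate (i.e. `t`). -/
noncomputable def p2 : (ℝ × ℝ → ℝ) → ℝ × ℝ → ℝ := pd2 (0, 1)

set_option maxHeartbeats 1000000 in
/-- Verification of the Class A solutions: if `β(y,t)` is C², positive, and satisfies
`β_t + μ β_{yy} = 0` on an open set `S ⊆ ℝ²`, then
`G(p,y,t) = μ(p ln p - p) - μ p ln β(y,t)` satisfies the G-equation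
`G_{yp}² - G_{yy} G_{pp} - G_{pt} = 0` at every point with `p > 0`, `(y,t) ∈ S`. -/
theorem stmt11 (S : Set (ℝ × ℝ)) (hS : IsOpen S) (μ : ℝ) (β : ℝ × ℝ → ℝ)
    (hβ : ContDiffOn ℝ 2 β S) (hpos : ∀ z ∈ S, 0 < β z)
    (hheat : ∀ z ∈ S, p2 β z + μ * p1 (p1 β) z = 0) :
    let G : ℝ × ℝ × ℝ → ℝ := fun r =>
      μ * (r.1 * Real.log r.1 - r.1) - μ * r.1 * Real.log (β (r.2.1, r.2.2))
    ∀ p > (0 : ℝ), ∀ z ∈ S,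
      (px (py G) (p, z.1, z.2)) ^ 2 - py (py G) (p, z.1, z.2) * px (px G) (p, z.1, z.2)
        - pt (px G) (p, z.1, z.2) = 0 := by
  intro G p hp z hz
  -- 2D facts about L = log ∘ β
  have hβd : ∀ w ∈ S, DifferentiableAt ℝ β w := fun w hw =>
    ((hβ.contDiffAt (hS.mem_nhds hw)).differentiableAt (by norm_num))
  set L : ℝ × ℝ → ℝ := fun w => Real.log (β w) with hLdef
  have hLd : ∀ w ∈ S, HasFDerivAt L ((β w)⁻¹ • fderiv ℝ β w) w := fun w hw =>
    ((hβd w hw).hasFDerivAt).log (ne_of_gt (hpos w hw))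
  have hp1L : ∀ w ∈ S, p1 L w = (β w)⁻¹ * p1 β w := by
    intro w hw
    have h := (hLd w hw).fderiv
    simp [p1, pd2, h]
  have hfd : ContDiffOn ℝ 1 (fderiv ℝ β) S := hβ.fderiv_of_isOpen hS (by norm_num)
  have hd1 : DifferentiableAt ℝ (p1 β) z := by
    have h2 : DifferentiableAt ℝ (fderiv ℝ β) z :=
      (hfd.differentiableOn (by norm_num) z hz).differentiableAt (hS.mem_nhds hz)
    exact (ContinuousLinearMap.apply ℝ ℝ ((1:ℝ), (0:ℝ))).differentiableAt.comp z h2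
  have hinv : HasFDerivAt (fun w => (β w)⁻¹) ((-(β z ^ 2)⁻¹) • fderiv ℝ β z) z :=
    (hasDerivAt_inv (ne_of_gt (hpos z hz))).comp_hasFDerivAt z (hβd z hz).hasFDerivAt
  have hg : HasFDerivAt (fun w => (β w)⁻¹ * p1 β w)
      ((β z)⁻¹ • fderiv ℝ (p1 β) z + p1 β z • ((-(β z ^ 2)⁻¹) • fderiv ℝ β z)) z :=
    hinv.mul hd1.hasFDerivAt
  have hgE : p1 L =ᶠ[nhds z] fun w => (β w)⁻¹ * p1 β w :=
    Filter.eventually_of_mem (hS.mem_nhds hz) (fun w hw => hp1L w hw)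
  have hp1Ld : HasFDerivAt (p1 L)
      ((β z)⁻¹ • fderiv ℝ (p1 β) z + p1 β z • ((-(β z ^ 2)⁻¹) • fderiv ℝ β z)) z :=
    hg.congr_of_eventuallyEq hgE
  have hL11 : p1 (p1 L) z = (β z)⁻¹ * p1 (p1 β) z - p1 β z * ((β z ^ 2)⁻¹ * p1 β z) := by
    have h := hp1Ld.fderiv
    simp only [p1, pd2] at h ⊢
    rw [h]
    simp
    ring
  -- 3D setup
  set fst3 : (ℝ × ℝ × ℝ) →L[ℝ] ℝ := ContinuousLinearMap.fst ℝ ℝ (ℝ × ℝ) with hfst3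
  set snd3 : (ℝ × ℝ × ℝ) →L[ℝ] (ℝ × ℝ) := ContinuousLinearMap.snd ℝ ℝ (ℝ × ℝ) with hsnd3
  -- first derivatives of G on the open region
  have key : ∀ r : ℝ × ℝ × ℝ, 0 < r.1 → r.2 ∈ S →
      px G r = μ * Real.log r.1 - μ * L r.2 ∧ py G r = -μ * r.1 * p1 L r.2 := by
    intro r hr1 hr2
    have hfst : HasFDerivAt (fun r : ℝ × ℝ × ℝ => r.1) fst3 r := hasFDerivAt_fst
    have hlog : HasFDerivAt (fun r : ℝ × ℝ × ℝ => Real.log r.1) ((r.1)⁻¹ • fst3) r :=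
      hfst.log (ne_of_gt hr1)
    have h3 : HasFDerivAt (fun r : ℝ × ℝ × ℝ => r.1 * Real.log r.1)
        (r.1 • ((r.1)⁻¹ • fst3) + Real.log r.1 • fst3) r := hfst.mul hlog
    have h4 := (h3.sub hfst).const_mul μ
    have hLr : HasFDerivAt (fun r : ℝ × ℝ × ℝ => L r.2)
        (((β r.2)⁻¹ • fderiv ℝ β r.2).comp snd3) r :=
      (hLd r.2 hr2).comp r hasFDerivAt_snd
    have hmul1 : HasFDerivAt (fun r : ℝ × ℝ × ℝ => μ * r.1) (μ • fst3) r := hfst.const_mul μ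
    have h5 := hmul1.mul hLr
    have hG : HasFDerivAt G
        (μ • ((r.1 • ((r.1)⁻¹ • fst3) + Real.log r.1 • fst3) - fst3) -
          ((μ * r.1) • (((β r.2)⁻¹ • fderiv ℝ β r.2).comp snd3) + L r.2 • (μ • fst3))) r :=
      h4.sub h5
    have hGf := hG.fderiv
    constructor
    · show fderiv ℝ G r (1, 0, 0) = _
      rw [hGf]
      simp [hfst3, hsnd3, show fderiv ℝ β r.2 (0, 0) = 0 from (fderiv ℝ β r.2).map_zero]
      field_simp
      ring
    · show fderiv ℝ G r (0, 1, 0) = _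
      rw [hGf]
      rw [hp1L r.2 hr2]
      simp [hfst3, hsnd3, p1, pd2]
  -- neighborhood
  have hU : IsOpen {r : ℝ × ℝ × ℝ | 0 < r.1 ∧ r.2 ∈ S} := by
    have he : {r : ℝ × ℝ × ℝ | 0 < r.1 ∧ r.2 ∈ S}
        = (Prod.fst ⁻¹' Set.Ioi (0:ℝ)) ∩ (Prod.snd ⁻¹' S) := rfl
    rw [he]
    exact (isOpen_Ioi.preimage continuous_fst).inter (hS.preimage continuous_snd)
  have hr0 : ((p, z.1, z.2) : ℝ × ℝ × ℝ) ∈ {r : ℝ × ℝ × ℝ | 0 < r.1 ∧ r.2 ∈ S} := ⟨hp, hz⟩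
  have hUnh : {r : ℝ × ℝ × ℝ | 0 < r.1 ∧ r.2 ∈ S} ∈ nhds ((p, z.1, z.2) : ℝ × ℝ × ℝ) :=
    hU.mem_nhds hr0
  have hfst0 : HasFDerivAt (fun r : ℝ × ℝ × ℝ => r.1) fst3 ((p, z.1, z.2) : ℝ × ℝ × ℝ) :=
    hasFDerivAt_fst
  -- second derivatives of px G
  have hE1 : px G =ᶠ[nhds ((p, z.1, z.2) : ℝ × ℝ × ℝ)]
      fun r => μ * Real.log r.1 - μ * L r.2 :=
    Filter.eventually_of_mem hUnh (fun r hr => (key r hr.1 hr.2).1)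
  have hA1 : HasFDerivAt (fun r : ℝ × ℝ × ℝ => μ * Real.log r.1 - μ * L r.2)
      (μ • (p⁻¹ • fst3) - μ • ((((β z)⁻¹ • fderiv ℝ β z).comp snd3)))
      ((p, z.1, z.2) : ℝ × ℝ × ℝ) :=
    ((hfst0.log (ne_of_gt hp)).const_mul μ).sub
      (((hLd z hz).comp ((p, z.1, z.2) : ℝ × ℝ × ℝ)
        (hasFDerivAt_snd : HasFDerivAt (Prod.snd : ℝ × ℝ × ℝ → ℝ × ℝ) snd3 ((p, z.1, z.2) : ℝ × ℝ × ℝ))).const_mul μ)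
  have hpxG : HasFDerivAt (px G)
      (μ • (p⁻¹ • fst3) - μ • ((((β z)⁻¹ • fderiv ℝ β z).comp snd3)))
      ((p, z.1, z.2) : ℝ × ℝ × ℝ) := hA1.congr_of_eventuallyEq hE1
  have hpxpx : px (px G) (p, z.1, z.2) = μ * p⁻¹ := by
    show fderiv ℝ (px G) (p, z.1, z.2) (1, 0, 0) = _
    rw [hpxG.fderiv]
    simp [hfst3, hsnd3, show fderiv ℝ β z (0, 0) = 0 from (fderiv ℝ β z).map_zero]
  have hptpx : pt (px G) (p, z.1, z.2) = -(μ * ((β z)⁻¹ * p2 β z)) := by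
    show fderiv ℝ (px G) (p, z.1, z.2) (0, 0, 1) = _
    rw [hpxG.fderiv]
    simp [hfst3, hsnd3, p2, pd2]
  -- second derivatives of py G
  have hE2 : py G =ᶠ[nhds ((p, z.1, z.2) : ℝ × ℝ × ℝ)]
      fun r => -μ * r.1 * p1 L r.2 :=
    Filter.eventually_of_mem hUnh (fun r hr => (key r hr.1 hr.2).2)
  have hA2 : HasFDerivAt (fun r : ℝ × ℝ × ℝ => -μ * r.1 * p1 L r.2)
      ((-μ * p) • ((((β z)⁻¹ • fderiv ℝ (p1 β) z +
          p1 β z • ((-(β z ^ 2)⁻¹) • fderiv ℝ β z))).comp snd3) +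
        p1 L z • ((-μ) • fst3))
      ((p, z.1, z.2) : ℝ × ℝ × ℝ) :=
    (hfst0.const_mul (-μ)).mul (hp1Ld.comp _ hasFDerivAt_snd)
  have hpyG : HasFDerivAt (py G)
      ((-μ * p) • ((((β z)⁻¹ • fderiv ℝ (p1 β) z +
          p1 β z • ((-(β z ^ 2)⁻¹) • fderiv ℝ β z))).comp snd3) +
        p1 L z • ((-μ) • fst3))
      ((p, z.1, z.2) : ℝ × ℝ × ℝ) := hA2.congr_of_eventuallyEq hE2
  have hpxpy : px (py G) (p, z.1, z.2) = -(μ * p1 L z) := by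
    show fderiv ℝ (py G) (p, z.1, z.2) (1, 0, 0) = _
    rw [hpyG.fderiv]
    simp [hfst3, hsnd3, show fderiv ℝ β z (0, 0) = 0 from (fderiv ℝ β z).map_zero,
      show fderiv ℝ (p1 β) z (0, 0) = 0 from (fderiv ℝ (p1 β) z).map_zero]
    ring
  have hpypy : py (py G) (p, z.1, z.2)
      = -μ * p * ((β z)⁻¹ * p1 (p1 β) z - p1 β z * ((β z ^ 2)⁻¹ * p1 β z)) := by
    show fderiv ℝ (py G) (p, z.1, z.2) (0, 1, 0) = _
    rw [hpyG.fderiv]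
    simp [hfst3, hsnd3, p1, pd2]
    ring
  -- conclude
  rw [hpxpx, hptpx, hpxpy, hpypy, hp1L z hz]
  have hb := hpos z hz
  have hbne : β z ≠ 0 := ne_of_gt hb
  have heat := hheat z hz
  have hpne : p ≠ 0 := ne_of_gt hp
  have heq : p2 β z = -(μ * p1 (p1 β) z) := by linarith
  rw [heq]
  field_simp
  ring
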